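/- arXiv:1411.0415 — 2 statements merged into one kernel-verified Lean document; each statement's English description precedes it below -/
import Mathlib

section
/- Let σ be a cyclic permutation of [n], let C_1, …, C_n be the chain decomposition of the intervals along σ, and let A be a collection of intervals along σ that does not contain the skew-butterfly poset S as a weak subposet. If C_{i+1} is of type 4, type 3^L or type 3^S, then |A ∩ C_i| ≤ 1 (indices of chains taken modulo n). -/
open Finset

/-- The family `𝒜` contains the skew-butterfly poset `S` as a (weak) subposet:
five pairwise distinct sets `a, b, c, d, e ∈ 𝒜` with
`a ⊆ c`, `a ⊆ d`, `b ⊆ c`, `b ⊆ d` and `b ⊆ e ⊆ d`. -/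
def ContainsSkewButterfly {n : ℕ} (𝒜 : Finset (Finset (Fin n))) : Prop :=
  ∃ a b c d e : Finset (Fin n),
    a ∈ 𝒜 ∧ b ∈ 𝒜 ∧ c ∈ 𝒜 ∧ d ∈ 𝒜 ∧ e ∈ 𝒜 ∧
    a ≠ b ∧ a ≠ c ∧ a ≠ d ∧ a ≠ e ∧ b ≠ c ∧ b ≠ d ∧ b ≠ e ∧ c ≠ d ∧ c ≠ e ∧ d ≠ e ∧
    a ⊆ c ∧ a ⊆ d ∧ b ⊆ c ∧ b ⊆ d ∧ b ⊆ e ∧ e ⊆ d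

/-- The interval `{x i, x (i+1), …, x (i+t)}` along the cyclic permutation `σ`
(indices taken modulo `n`). -/
def cycInterval (n : ℕ) (σ : ZMod n ≃ Fin n) (i : ZMod n) (t : ℕ) : Finset (Fin n) :=
  (Finset.range (t + 1)).image fun s : ℕ => σ (i + (s : ZMod n))

/-- `I` is an interval along the cyclic permutation `σ`; neither `∅` nor `[n]`
is an interval. -/
def IsCycInterval (n : ℕ) (σ : ZMod n ≃ Fin n) (I : Finset (Fin n)) : Prop :=
  ∃ (i : ZMod n) (t : ℕ), t ≤ n - 2 ∧ I = cycInterval n σ i t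

/-- The chain `C i` of the chain decomposition of the intervals along `σ`: it contains
exactly one interval of each size `1, 2, …, n - 1`, where the interval of size `2k` is
`{x (i-k), …, x (i+k-1)}` and the interval of size `2k+1` is `{x (i-k), …, x (i+k)}`. -/
def chainC (n : ℕ) (σ : ZMod n ≃ Fin n) (i : ZMod n) : Finset (Finset (Fin n)) :=
  (Finset.Icc 1 (n - 1)).image fun m => cycInterval n σ (i - ((m / 2 : ℕ) : ZMod n)) (m - 1)

/-- The chain `C` is of type `3^S`: exactly `3` sets of `𝒜` on `C`, whose sizes are
not consecutive. -/
def Type3S {n : ℕ} (𝒜 C : Finset (Finset (Fin n))) : Prop :=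
  (𝒜 ∩ C).card = 3 ∧ ¬ ∃ j : ℕ, (𝒜 ∩ C).image Finset.card = {j, j + 1, j + 2}

/-- The chain `C` is of type `3^R`: exactly `3` sets of `𝒜` on `C`, with consecutive sizes
`j, j+1, j+2` where `j` is odd (two of the sets have odd size). -/
def Type3R {n : ℕ} (𝒜 C : Finset (Finset (Fin n))) : Prop :=
  (𝒜 ∩ C).card = 3 ∧ ∃ j : ℕ, Odd j ∧ (𝒜 ∩ C).image Finset.card = {j, j + 1, j + 2}

/-- The chain `C` is of type `3^L`: exactly `3` sets of `𝒜` on `C`, with consecutive sizes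
`j, j+1, j+2` where `j` is even (two of the sets have even size). -/
def Type3L {n : ℕ} (𝒜 C : Finset (Finset (Fin n))) : Prop :=
  (𝒜 ∩ C).card = 3 ∧ ∃ j : ℕ, Even j ∧ (𝒜 ∩ C).image Finset.card = {j, j + 1, j + 2}

/-! ### Auxiliary machinery -/

/-- The interval of size `m` on the chain `C i`. -/
def Eint (n : ℕ) (σ : ZMod n ≃ Fin n) (i : ZMod n) (m : ℕ) : Finset (Fin n) :=
  cycInterval n σ (i - ((m / 2 : ℕ) : ZMod n)) (m - 1)

lemma chainC_eq (n : ℕ) (σ : ZMod n ≃ Fin n) (i : ZMod n) :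
    chainC n σ i = (Finset.Icc 1 (n - 1)).image (Eint n σ i) := rfl

lemma cycInterval_subset (n : ℕ) (σ : ZMod n ≃ Fin n) {a a' : ZMod n} {t t' : ℕ} (d : ℕ)
    (ha : a = a' + (d : ZMod n)) (hd : d + t ≤ t') :
    cycInterval n σ a t ⊆ cycInterval n σ a' t' := by
  intro x hx
  simp only [cycInterval, mem_image, mem_range] at hx ⊢
  obtain ⟨s, hs, rfl⟩ := hx
  refine ⟨d + s, by omega, ?_⟩
  rw [ha]
  congr 1
  push_cast
  ring

lemma cycInterval_card (n : ℕ) (σ : ZMod n ≃ Fin n) (a : ZMod n) (t : ℕ) (ht : t + 1 ≤ n) :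
    (cycInterval n σ a t).card = t + 1 := by
  haveI : NeZero n := ⟨by omega⟩
  rw [cycInterval, Finset.card_image_of_injOn, Finset.card_range]
  intro x hx y hy hxy
  simp only [Finset.coe_range, Set.mem_Iio] at hx hy
  have h1 : (x : ZMod n) = (y : ZMod n) := add_left_cancel (σ.injective hxy)
  have h2 := congrArg ZMod.val h1
  rwa [ZMod.val_cast_of_lt (by omega), ZMod.val_cast_of_lt (by omega)] at h2

lemma Eint_card (n : ℕ) (σ : ZMod n ≃ Fin n) (i : ZMod n) {m : ℕ}
    (h1 : 1 ≤ m) (h2 : m ≤ n - 1) : (Eint n σ i m).card = m := by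
  rw [Eint, cycInterval_card n σ _ _ (by omega)]
  omega

lemma Eint_mono (n : ℕ) (σ : ZMod n ≃ Fin n) (i : ZMod n) {s s' : ℕ}
    (h1 : 1 ≤ s) (h : s ≤ s') : Eint n σ i s ⊆ Eint n σ i s' := by
  obtain ⟨d, hd⟩ : ∃ d, s' / 2 = s / 2 + d := ⟨s' / 2 - s / 2, by omega⟩
  apply cycInterval_subset n σ d _ (by omega)
  rw [hd]
  push_cast
  ring

lemma Eint_up (n : ℕ) (σ : ZMod n ≃ Fin n) (i : ZMod n) {s t : ℕ}
    (h1 : 1 ≤ s) (h : s / 2 < t / 2) : Eint n σ i s ⊆ Eint n σ (i + 1) t := by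
  obtain ⟨d, hd⟩ : ∃ d, t / 2 = s / 2 + 1 + d := ⟨t / 2 - s / 2 - 1, by omega⟩
  apply cycInterval_subset n σ d _ (by omega)
  rw [hd]
  push_cast
  ring

lemma Eint_down (n : ℕ) (σ : ZMod n ≃ Fin n) (i : ZMod n) {t s : ℕ}
    (h1 : 1 ≤ t) (h : (t + 1) / 2 < (s + 1) / 2) : Eint n σ (i + 1) t ⊆ Eint n σ i s := by
  obtain ⟨d, hd⟩ : ∃ d, s / 2 + 1 = t / 2 + d := ⟨s / 2 + 1 - t / 2, by omega⟩
  apply cycInterval_subset n σ d _ (by omega)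
  have hz : ((s / 2 : ℕ) : ZMod n) + 1 = ((t / 2 : ℕ) : ZMod n) + (d : ZMod n) := by
    exact_mod_cast congrArg (Nat.cast : ℕ → ZMod n) hd
  linear_combination hz

lemma Eint_ne_same (n : ℕ) (σ : ZMod n ≃ Fin n) (i : ZMod n) {s t : ℕ}
    (hs1 : 1 ≤ s) (hs2 : s ≤ n - 1) (ht1 : 1 ≤ t) (ht2 : t ≤ n - 1) (hst : s ≠ t) :
    Eint n σ i s ≠ Eint n σ i t := fun h =>
  hst (by rw [← Eint_card n σ i hs1 hs2, h, Eint_card n σ i ht1 ht2])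

lemma Eint_ne_cross (n : ℕ) (σ : ZMod n ≃ Fin n) (i : ZMod n) {s t : ℕ}
    (hs1 : 1 ≤ s) (hs2 : s ≤ n - 1) (ht1 : 1 ≤ t) (ht2 : t ≤ n - 1) :
    Eint n σ i s ≠ Eint n σ (i + 1) t := by
  rcases eq_or_ne s t with rfl | hst
  · intro hEq
    have hmem : σ (i + 1 - ((s / 2 : ℕ) : ZMod n) + ((s - 1 : ℕ) : ZMod n)) ∈
        Eint n σ (i + 1) s := by
      simp only [Eint, cycInterval, mem_image, mem_range]
      exact ⟨s - 1, by omega, rfl⟩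
    rw [← hEq] at hmem
    simp only [Eint, cycInterval, mem_image, mem_range] at hmem
    obtain ⟨k, hk, hσ⟩ := hmem
    have h1 : i - ((s / 2 : ℕ) : ZMod n) + (k : ZMod n)
        = i + 1 - ((s / 2 : ℕ) : ZMod n) + ((s - 1 : ℕ) : ZMod n) := σ.injective hσ
    have h3 : ((s - 1 : ℕ) : ZMod n) = (s : ZMod n) - 1 := by
      rw [Nat.cast_sub hs1]; push_cast; ring
    rw [h3] at h1
    have h2 : ((s - k : ℕ) : ZMod n) = 0 := by
      rw [Nat.cast_sub (by omega : k ≤ s)]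
      linear_combination -h1
    haveI : NeZero n := ⟨by omega⟩
    have h4 := congrArg ZMod.val h2
    rw [ZMod.val_cast_of_lt (by omega), ZMod.val_zero] at h4
    omega
  · intro hEq
    exact hst (by rw [← Eint_card n σ i hs1 hs2, hEq, Eint_card n σ (i + 1) ht1 ht2])

lemma sort3 (p : ℕ → Prop) (a b c : ℕ) (hab : a ≠ b) (hac : a ≠ c) (hbc : b ≠ c)
    (ha : p a) (hb : p b) (hc : p c) :
    ∃ t1 t2 t3, t1 < t2 ∧ t2 < t3 ∧ p t1 ∧ p t2 ∧ p t3 ∧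
      ({t1, t2, t3} : Finset ℕ) = {a, b, c} := by
  rcases Nat.lt_or_ge a b with h1 | h1 <;> rcases Nat.lt_or_ge b c with h2 | h2 <;>
    rcases Nat.lt_or_ge a c with h3 | h3
  all_goals first
    | exact ⟨a, b, c, by omega, by omega, ha, hb, hc, rfl⟩
    | exact ⟨a, c, b, by omega, by omega, ha, hc, hb,
        by ext x; simp only [Finset.mem_insert, Finset.mem_singleton]; tauto⟩
    | exact ⟨c, a, b, by omega, by omega, hc, ha, hb,
        by ext x; simp only [Finset.mem_insert, Finset.mem_singleton]; tauto⟩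
    | exact ⟨b, a, c, by omega, by omega, hb, ha, hc,
        by ext x; simp only [Finset.mem_insert, Finset.mem_singleton]; tauto⟩
    | exact ⟨b, c, a, by omega, by omega, hb, hc, ha,
        by ext x; simp only [Finset.mem_insert, Finset.mem_singleton]; tauto⟩
    | exact ⟨c, b, a, by omega, by omega, hc, hb, ha,
        by ext x; simp only [Finset.mem_insert, Finset.mem_singleton]; tauto⟩

lemma sb_core (n : ℕ) (σ : ZMod n ≃ Fin n) (𝒜 : Finset (Finset (Fin n))) (i : ZMod n)
    (s1 s2 t1 t2 t3 : ℕ)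
    (hs1 : 1 ≤ s1) (hs12 : s1 < s2) (hs2 : s2 ≤ n - 1)
    (ht1 : 1 ≤ t1) (ht12 : t1 < t2) (ht23 : t2 < t3) (ht3 : t3 ≤ n - 1)
    (hm1 : Eint n σ i s1 ∈ 𝒜) (hm2 : Eint n σ i s2 ∈ 𝒜)
    (hn1 : Eint n σ (i + 1) t1 ∈ 𝒜) (hn2 : Eint n σ (i + 1) t2 ∈ 𝒜)
    (hn3 : Eint n σ (i + 1) t3 ∈ 𝒜)
    (htype : t1 + 3 ≤ t3 ∨ t1 % 2 = 0) :
    ContainsSkewButterfly 𝒜 := by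
  have bs1 : s1 ≤ n - 1 := by omega
  have bs2 : 1 ≤ s2 := by omega
  have bt1 : t1 ≤ n - 1 := by omega
  have bt2l : 1 ≤ t2 := by omega
  have bt2 : t2 ≤ n - 1 := by omega
  have bt3l : 1 ≤ t3 := by omega
  have hcov : (s1 / 2 < t3 / 2 ∧ (t1 + 1) / 2 < (s2 + 1) / 2)
      ∨ (s1 / 2 < t2 / 2 ∧ s2 / 2 < t3 / 2)
      ∨ ((t2 + 1) / 2 < (s2 + 1) / 2 ∧ (t1 + 1) / 2 < (s1 + 1) / 2) := by omega
  rcases hcov with ⟨c1, c2⟩ | ⟨c1, c2⟩ | ⟨c1, c2⟩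
  · -- a = s1, b = t1, c = s2, d = t3, e = t2
    exact ⟨Eint n σ i s1, Eint n σ (i + 1) t1, Eint n σ i s2, Eint n σ (i + 1) t3,
      Eint n σ (i + 1) t2, hm1, hn1, hm2, hn3, hn2,
      Eint_ne_cross n σ i hs1 bs1 ht1 bt1,
      Eint_ne_same n σ i hs1 bs1 bs2 hs2 (by omega),
      Eint_ne_cross n σ i hs1 bs1 bt3l ht3,
      Eint_ne_cross n σ i hs1 bs1 bt2l bt2,
      (Eint_ne_cross n σ i bs2 hs2 ht1 bt1).symm,
      Eint_ne_same n σ (i + 1) ht1 bt1 bt3l ht3 (by omega),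
      Eint_ne_same n σ (i + 1) ht1 bt1 bt2l bt2 (by omega),
      Eint_ne_cross n σ i bs2 hs2 bt3l ht3,
      Eint_ne_cross n σ i bs2 hs2 bt2l bt2,
      Eint_ne_same n σ (i + 1) bt3l ht3 bt2l bt2 (by omega),
      Eint_mono n σ i hs1 (le_of_lt hs12),
      Eint_up n σ i hs1 c1,
      Eint_down n σ i ht1 c2,
      Eint_mono n σ (i + 1) ht1 (by omega),
      Eint_mono n σ (i + 1) ht1 (le_of_lt ht12),
      Eint_mono n σ (i + 1) bt2l (le_of_lt ht23)⟩
  · -- a = t1, b = s1, c = t2, d = t3, e = s2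
    exact ⟨Eint n σ (i + 1) t1, Eint n σ i s1, Eint n σ (i + 1) t2, Eint n σ (i + 1) t3,
      Eint n σ i s2, hn1, hm1, hn2, hn3, hm2,
      (Eint_ne_cross n σ i hs1 bs1 ht1 bt1).symm,
      Eint_ne_same n σ (i + 1) ht1 bt1 bt2l bt2 (by omega),
      Eint_ne_same n σ (i + 1) ht1 bt1 bt3l ht3 (by omega),
      (Eint_ne_cross n σ i bs2 hs2 ht1 bt1).symm,
      Eint_ne_cross n σ i hs1 bs1 bt2l bt2,
      Eint_ne_cross n σ i hs1 bs1 bt3l ht3,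
      Eint_ne_same n σ i hs1 bs1 bs2 hs2 (by omega),
      Eint_ne_same n σ (i + 1) bt2l bt2 bt3l ht3 (by omega),
      (Eint_ne_cross n σ i bs2 hs2 bt2l bt2).symm,
      (Eint_ne_cross n σ i bs2 hs2 bt3l ht3).symm,
      Eint_mono n σ (i + 1) ht1 (le_of_lt ht12),
      Eint_mono n σ (i + 1) ht1 (by omega),
      Eint_up n σ i hs1 c1,
      Eint_up n σ i hs1 (by omega),
      Eint_mono n σ i hs1 (le_of_lt hs12),
      Eint_up n σ i bs2 c2⟩
  · -- a = t2, b = t1, c = t3, d = s2, e = s1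
    exact ⟨Eint n σ (i + 1) t2, Eint n σ (i + 1) t1, Eint n σ (i + 1) t3, Eint n σ i s2,
      Eint n σ i s1, hn2, hn1, hn3, hm2, hm1,
      Eint_ne_same n σ (i + 1) bt2l bt2 ht1 bt1 (by omega),
      Eint_ne_same n σ (i + 1) bt2l bt2 bt3l ht3 (by omega),
      (Eint_ne_cross n σ i bs2 hs2 bt2l bt2).symm,
      (Eint_ne_cross n σ i hs1 bs1 bt2l bt2).symm,
      Eint_ne_same n σ (i + 1) ht1 bt1 bt3l ht3 (by omega),
      (Eint_ne_cross n σ i bs2 hs2 ht1 bt1).symm,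
      (Eint_ne_cross n σ i hs1 bs1 ht1 bt1).symm,
      (Eint_ne_cross n σ i bs2 hs2 bt3l ht3).symm,
      (Eint_ne_cross n σ i hs1 bs1 bt3l ht3).symm,
      Eint_ne_same n σ i bs2 hs2 hs1 bs1 (by omega),
      Eint_mono n σ (i + 1) bt2l (le_of_lt ht23),
      Eint_down n σ i bt2l c1,
      Eint_mono n σ (i + 1) ht1 (by omega),
      Eint_down n σ i ht1 (by omega),
      Eint_down n σ i ht1 c2,
      Eint_mono n σ i hs1 (le_of_lt hs12)⟩

/-- If `C (i+1)` is of type `4`, `3^L` or `3^S`, then the previous chain `C i` meets `𝒜`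
in at most one set. -/
theorem skew_butterfly_chain_cor1 (n : ℕ) (σ : ZMod n ≃ Fin n)
    (𝒜 : Finset (Finset (Fin n))) (hInt : ∀ I ∈ 𝒜, IsCycInterval n σ I)
    (hS : ¬ ContainsSkewButterfly 𝒜) (i : ZMod n)
    (hi : (𝒜 ∩ chainC n σ (i + 1)).card = 4 ∨ Type3L 𝒜 (chainC n σ (i + 1)) ∨
      Type3S 𝒜 (chainC n σ (i + 1))) :
    (𝒜 ∩ chainC n σ i).card ≤ 1 := by
  by_contra hcon
  push_neg at hcon
  obtain ⟨X, hX, Y, hY, hXY⟩ := Finset.one_lt_card.mp hcon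
  obtain ⟨hXa, hXc⟩ := Finset.mem_inter.mp hX
  obtain ⟨hYa, hYc⟩ := Finset.mem_inter.mp hY
  rw [chainC_eq, Finset.mem_image] at hXc hYc
  obtain ⟨s1, hs1Icc, hs1X⟩ := hXc
  obtain ⟨s2, hs2Icc, hs2Y⟩ := hYc
  rw [Finset.mem_Icc] at hs1Icc hs2Icc
  subst hs1X hs2Y
  have hs12 : s1 ≠ s2 := fun h => hXY (by rw [h])
  have hmem : ∀ Z ∈ 𝒜 ∩ chainC n σ (i + 1),
      ∃ m, (1 ≤ m ∧ m ≤ n - 1 ∧ Eint n σ (i + 1) m ∈ 𝒜) ∧ Eint n σ (i + 1) m = Z := by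
    intro Z hZ
    obtain ⟨hZa, hZc⟩ := Finset.mem_inter.mp hZ
    rw [chainC_eq, Finset.mem_image] at hZc
    obtain ⟨m, hm, hmZ⟩ := hZc
    rw [Finset.mem_Icc] at hm
    exact ⟨m, ⟨hm.1, hm.2, hmZ ▸ hZa⟩, hmZ⟩
  set q : ℕ → Prop := fun m => 1 ≤ m ∧ m ≤ n - 1 ∧ Eint n σ (i + 1) m ∈ 𝒜 with hq
  have key : ∃ t1 t2 t3, t1 < t2 ∧ t2 < t3 ∧ q t1 ∧ q t2 ∧ q t3 ∧
      (t1 + 3 ≤ t3 ∨ t1 % 2 = 0) := by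
    rcases hi with h4 | ⟨hcard, j, hjeven, himg⟩ | ⟨hcard, hno⟩
    · -- type 4
      have hpos : 0 < (𝒜 ∩ chainC n σ (i + 1)).card := by rw [h4]; norm_num
      obtain ⟨x, hxB⟩ := Finset.card_pos.mp hpos
      have herase : ((𝒜 ∩ chainC n σ (i + 1)).erase x).card = 3 := by
        rw [Finset.card_erase_of_mem hxB, h4]
      obtain ⟨y, z, w, hyz, hyw, hzw, hE⟩ := Finset.card_eq_three.mp herase
      have hyE : y ∈ (𝒜 ∩ chainC n σ (i + 1)).erase x := by rw [hE]; simp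
      have hzE : z ∈ (𝒜 ∩ chainC n σ (i + 1)).erase x := by rw [hE]; simp
      have hwE : w ∈ (𝒜 ∩ chainC n σ (i + 1)).erase x := by rw [hE]; simp
      obtain ⟨mx, qx, hmx⟩ := hmem x hxB
      obtain ⟨my, qy, hmy⟩ := hmem y (Finset.mem_of_mem_erase hyE)
      obtain ⟨mz, qz, hmz⟩ := hmem z (Finset.mem_of_mem_erase hzE)
      obtain ⟨mw, qw, hmw⟩ := hmem w (Finset.mem_of_mem_erase hwE)
      have hyx := Finset.ne_of_mem_erase hyE
      have hzx := Finset.ne_of_mem_erase hzE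
      have hwx := Finset.ne_of_mem_erase hwE
      have d1 : my ≠ mz := fun h => hyz (by rw [← hmy, h, hmz])
      have d2 : my ≠ mw := fun h => hyw (by rw [← hmy, h, hmw])
      have d3 : mz ≠ mw := fun h => hzw (by rw [← hmz, h, hmw])
      have d4 : mx ≠ my := fun h => hyx (by rw [← hmy, ← h, hmx])
      have d5 : mx ≠ mz := fun h => hzx (by rw [← hmz, ← h, hmx])
      have d6 : mx ≠ mw := fun h => hwx (by rw [← hmw, ← h, hmx])
      obtain ⟨u1, u2, u3, h12, h23, p1, p2, p3, hfe⟩ := sort3 q my mz mw d1 d2 d3 qy qz qw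
      have hu1 : u1 = my ∨ u1 = mz ∨ u1 = mw := by
        have : u1 ∈ ({my, mz, mw} : Finset ℕ) := hfe ▸ (by simp)
        simpa using this
      have hu2 : u2 = my ∨ u2 = mz ∨ u2 = mw := by
        have : u2 ∈ ({my, mz, mw} : Finset ℕ) := hfe ▸ (by simp)
        simpa using this
      have hu3 : u3 = my ∨ u3 = mz ∨ u3 = mw := by
        have : u3 ∈ ({my, mz, mw} : Finset ℕ) := hfe ▸ (by simp)
        simpa using this
      rcases Nat.lt_or_ge mx u1 with h | h
      · exact ⟨mx, u1, u3, by omega, by omega, qx, p1, p3, Or.inl (by omega)⟩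
      rcases Nat.lt_or_ge mx u2 with h' | h'
      · exact ⟨u1, mx, u3, by omega, by omega, p1, qx, p3, Or.inl (by omega)⟩
      rcases Nat.lt_or_ge mx u3 with h'' | h''
      · exact ⟨u1, u2, u3, h12, h23, p1, p2, p3, Or.inl (by omega)⟩
      · exact ⟨u1, u2, mx, h12, by omega, p1, p2, qx, Or.inl (by omega)⟩
    · -- type 3L
      obtain ⟨x, y, z, hxy, hxz, hyz, hB⟩ := Finset.card_eq_three.mp hcard
      have hxB : x ∈ 𝒜 ∩ chainC n σ (i + 1) := by rw [hB]; simp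
      have hyB : y ∈ 𝒜 ∩ chainC n σ (i + 1) := by rw [hB]; simp
      have hzB : z ∈ 𝒜 ∩ chainC n σ (i + 1) := by rw [hB]; simp
      obtain ⟨mx, qx, hmx⟩ := hmem x hxB
      obtain ⟨my, qy, hmy⟩ := hmem y hyB
      obtain ⟨mz, qz, hmz⟩ := hmem z hzB
      have d1 : mx ≠ my := fun h => hxy (by rw [← hmx, h, hmy])
      have d2 : mx ≠ mz := fun h => hxz (by rw [← hmx, h, hmz])
      have d3 : my ≠ mz := fun h => hyz (by rw [← hmy, h, hmz])
      obtain ⟨t1, t2, t3, h12, h23, p1, p2, p3, hfe⟩ := sort3 q mx my mz d1 d2 d3 qx qy qz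
      have hcx : x.card = mx := by rw [← hmx]; exact Eint_card n σ (i + 1) qx.1 qx.2.1
      have hcy : y.card = my := by rw [← hmy]; exact Eint_card n σ (i + 1) qy.1 qy.2.1
      have hcz : z.card = mz := by rw [← hmz]; exact Eint_card n σ (i + 1) qz.1 qz.2.1
      have him : (𝒜 ∩ chainC n σ (i + 1)).image Finset.card = {mx, my, mz} := by
        rw [hB, Finset.image_insert, Finset.image_insert, Finset.image_singleton,
          hcx, hcy, hcz]
      have heq : ({t1, t2, t3} : Finset ℕ) = {j, j + 1, j + 2} :=
        hfe.trans (him.symm.trans himg)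
      have hext := Finset.ext_iff.mp heq
      simp only [Finset.mem_insert, Finset.mem_singleton] at hext
      have e1 := (hext t1).mp (Or.inl rfl)
      have e2 := (hext t2).mp (Or.inr (Or.inl rfl))
      have e3 := (hext t3).mp (Or.inr (Or.inr rfl))
      rw [Nat.even_iff] at hjeven
      exact ⟨t1, t2, t3, h12, h23, p1, p2, p3, Or.inr (by omega)⟩
    · -- type 3S
      obtain ⟨x, y, z, hxy, hxz, hyz, hB⟩ := Finset.card_eq_three.mp hcard
      have hxB : x ∈ 𝒜 ∩ chainC n σ (i + 1) := by rw [hB]; simp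
      have hyB : y ∈ 𝒜 ∩ chainC n σ (i + 1) := by rw [hB]; simp
      have hzB : z ∈ 𝒜 ∩ chainC n σ (i + 1) := by rw [hB]; simp
      obtain ⟨mx, qx, hmx⟩ := hmem x hxB
      obtain ⟨my, qy, hmy⟩ := hmem y hyB
      obtain ⟨mz, qz, hmz⟩ := hmem z hzB
      have d1 : mx ≠ my := fun h => hxy (by rw [← hmx, h, hmy])
      have d2 : mx ≠ mz := fun h => hxz (by rw [← hmx, h, hmz])
      have d3 : my ≠ mz := fun h => hyz (by rw [← hmy, h, hmz])
      obtain ⟨t1, t2, t3, h12, h23, p1, p2, p3, hfe⟩ := sort3 q mx my mz d1 d2 d3 qx qy qz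
      have hcx : x.card = mx := by rw [← hmx]; exact Eint_card n σ (i + 1) qx.1 qx.2.1
      have hcy : y.card = my := by rw [← hmy]; exact Eint_card n σ (i + 1) qy.1 qy.2.1
      have hcz : z.card = mz := by rw [← hmz]; exact Eint_card n σ (i + 1) qz.1 qz.2.1
      have him : (𝒜 ∩ chainC n σ (i + 1)).image Finset.card = {t1, t2, t3} := by
        rw [hB, Finset.image_insert, Finset.image_insert, Finset.image_singleton,
          hcx, hcy, hcz, ← hfe]
      refine ⟨t1, t2, t3, h12, h23, p1, p2, p3, Or.inl ?_⟩
      by_contra hlt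
      exact hno ⟨t1, by rw [him, show t2 = t1 + 1 by omega, show t3 = t1 + 2 by omega]⟩
  obtain ⟨t1, t2, t3, h12, h23, ⟨q1a, q1b, q1m⟩, ⟨q2a, q2b, q2m⟩, ⟨q3a, q3b, q3m⟩, htype⟩ := key
  rcases Nat.lt_or_ge s1 s2 with hlt | hge
  · exact hS (sb_core n σ 𝒜 i s1 s2 t1 t2 t3 hs1Icc.1 hlt hs2Icc.2 q1a h12 h23 q3b
      hXa hYa q1m q2m q3m htype)
  · exact hS (sb_core n σ 𝒜 i s2 s1 t1 t2 t3 hs2Icc.1 (by omega) hs1Icc.2 q1a h12 h23 q3b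
      hYa hXa q1m q2m q3m htype)
end

section
/- Let k ≥ 2, let σ be a cyclic permutation of [n], let C_1, …, C_n be the chain decomposition of the intervals along σ, and let A be a collection of intervals along σ that contains neither Y_k nor Y_k' as a weak subposet. If |A ∩ C_{i+1}| = k+1 and the second largest set of A ∩ C_{i+1} has even cardinality (i.e. C_{i+1} is of type (k+1)^L), then |A ∩ C_i| ≤ k−1; moreover, if |A ∩ C_i| = k−1, then the largest set of A ∩ C_i has the same cardinality as the second largest set of A ∩ C_{i+1} (indices of chains taken modulo n). -/
open Finset

/-- The family `𝒜` contains `Y_k` as a (weak) subposet: `k + 2` pairwise distinct sets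
`A 1 ⊆ A 2 ⊆ ⋯ ⊆ A k`, `A k ⊆ B`, `A k ⊆ C`, all in `𝒜`. -/
def ContainsYk {n : ℕ} (k : ℕ) (𝒜 : Finset (Finset (Fin n))) : Prop :=
  ∃ (A : Fin k → Finset (Fin n)) (B C : Finset (Fin n)),
    (∀ i, A i ∈ 𝒜) ∧ B ∈ 𝒜 ∧ C ∈ 𝒜 ∧
    Function.Injective A ∧ (∀ i, A i ≠ B) ∧ (∀ i, A i ≠ C) ∧ B ≠ C ∧
    (∀ i j : Fin k, i ≤ j → A i ⊆ A j) ∧ (∀ i, A i ⊆ B) ∧ (∀ i, A i ⊆ C)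

/-- The family `𝒜` contains `Y_k'` as a (weak) subposet: `k + 2` pairwise distinct sets
`A k ⊆ A (k-1) ⊆ ⋯ ⊆ A 1`, `B ⊆ A k`, `C ⊆ A k`, all in `𝒜`. -/
def ContainsYk' {n : ℕ} (k : ℕ) (𝒜 : Finset (Finset (Fin n))) : Prop :=
  ∃ (A : Fin k → Finset (Fin n)) (B C : Finset (Fin n)),
    (∀ i, A i ∈ 𝒜) ∧ B ∈ 𝒜 ∧ C ∈ 𝒜 ∧
    Function.Injective A ∧ (∀ i, A i ≠ B) ∧ (∀ i, A i ≠ C) ∧ B ≠ C ∧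
    (∀ i j : Fin k, i ≤ j → A j ⊆ A i) ∧ (∀ i, B ⊆ A i) ∧ (∀ i, C ⊆ A i)

/-- `B` is the largest (by cardinality) member of the family `F`. -/
def IsLargestCard {n : ℕ} (F : Finset (Finset (Fin n))) (B : Finset (Fin n)) : Prop :=
  B ∈ F ∧ ∀ X ∈ F, X.card ≤ B.card

/-- `B` is the second largest (by cardinality) member of the family `F`: exactly one
member of `F` has strictly larger cardinality. -/
def IsSecondLargestCard {n : ℕ} (F : Finset (Finset (Fin n))) (B : Finset (Fin n)) : Prop :=
  B ∈ F ∧ (F.filter fun X => B.card < X.card).card = 1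

/-! ### Auxiliary definitions and lemmas -/

def Jc (n : ℕ) (σ : ZMod n ≃ Fin n) (c : ZMod n) (m : ℕ) : Finset (Fin n) :=
  cycInterval n σ (c - ((m / 2 : ℕ) : ZMod n)) (m - 1)

section Aux
variable {n : ℕ} (σ : ZMod n ≃ Fin n)

lemma mem_cycInterval {c : ZMod n} {t : ℕ} {x : Fin n} :
    x ∈ cycInterval n σ c t ↔ ∃ s ≤ t, σ (c + (s : ZMod n)) = x := by
  simp [cycInterval, Finset.mem_image, Finset.mem_range, Nat.lt_succ_iff]

lemma cycInterval_subset' {c c' : ZMod n} (r : ℕ) {t t' : ℕ} (hc : c = c' + (r : ZMod n))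
    (h : r + t ≤ t') : cycInterval n σ c t ⊆ cycInterval n σ c' t' := by
  intro x hx
  rw [mem_cycInterval] at hx ⊢
  obtain ⟨s, hs, rfl⟩ := hx
  exact ⟨r + s, by omega, by rw [hc]; push_cast; ring_nf⟩

lemma card_cycInterval [NeZero n] {c : ZMod n} {t : ℕ} (h : t + 1 ≤ n) :
    (cycInterval n σ c t).card = t + 1 := by
  rw [cycInterval, Finset.card_image_of_injOn, Finset.card_range]
  intro s hs s' hs' he
  simp only [Finset.coe_range, Set.mem_Iio] at hs hs'
  have h2 : (s : ZMod n) = (s' : ZMod n) := add_left_cancel (σ.injective he)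
  have := congrArg ZMod.val h2
  rwa [ZMod.val_cast_of_lt (by omega), ZMod.val_cast_of_lt (by omega)] at this

lemma mem_chainC {c : ZMod n} {X : Finset (Fin n)} :
    X ∈ chainC n σ c ↔ ∃ m, 1 ≤ m ∧ m ≤ n - 1 ∧ X = Jc n σ c m := by
  simp only [chainC, Finset.mem_image, Finset.mem_Icc, Jc]
  constructor
  · rintro ⟨m, ⟨h1, h2⟩, rfl⟩; exact ⟨m, h1, h2, rfl⟩
  · rintro ⟨m, h1, h2, rfl⟩; exact ⟨m, ⟨h1, h2⟩, rfl⟩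

lemma card_Jc [NeZero n] {c : ZMod n} {m : ℕ} (h1 : 1 ≤ m) (h2 : m ≤ n - 1) :
    (Jc n σ c m).card = m := by
  rw [Jc, card_cycInterval σ (by omega)]; omega

lemma Jc_mono {c : ZMod n} {m m' : ℕ} (h1 : 1 ≤ m) (h : m ≤ m') :
    Jc n σ c m ⊆ Jc n σ c m' := by
  refine cycInterval_subset' σ (m' / 2 - m / 2) ?_ (by omega)
  have hd : m / 2 ≤ m' / 2 := Nat.div_le_div_right h
  rw [Nat.cast_sub hd]; ring

lemma Jc_up {c : ZMod n} {m : ℕ} (hm : m % 2 = 1) :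
    Jc n σ c m ⊆ Jc n σ (c + 1) (m + 1) := by
  refine cycInterval_subset' σ 0 ?_ (by omega)
  have : (m + 1) / 2 = m / 2 + 1 := by omega
  rw [this]; push_cast; ring

lemma Jc_dn {c : ZMod n} {m : ℕ} (hm : m % 2 = 0) (h1 : 1 ≤ m) :
    Jc n σ (c + 1) m ⊆ Jc n σ c (m + 1) := by
  refine cycInterval_subset' σ 1 ?_ (by omega)
  have : (m + 1) / 2 = m / 2 := by omega
  rw [this]; push_cast; ring

lemma Jc_cross_SA {c : ZMod n} {s t : ℕ} (h1 : 1 ≤ s) (h : s < t)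
    (hp : t % 2 = 0 ∨ s + 2 ≤ t) : Jc n σ c s ⊆ Jc n σ (c + 1) t := by
  rcases Nat.even_or_odd t with ht | ht
  · have ht2 : t % 2 = 0 := Nat.even_iff.1 ht
    calc Jc n σ c s ⊆ Jc n σ c (t - 1) := Jc_mono σ h1 (by omega)
      _ ⊆ Jc n σ (c + 1) t := by
          have h3 := Jc_up σ (c := c) (m := t - 1) (by omega)
          have he : t - 1 + 1 = t := by omega
          rwa [he] at h3
  · have ht2 : t % 2 = 1 := Nat.odd_iff.1 ht
    have hs2 : s + 2 ≤ t := by omega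
    calc Jc n σ c s ⊆ Jc n σ c (t - 2) := Jc_mono σ h1 (by omega)
      _ ⊆ Jc n σ (c + 1) (t - 1) := by
          have h3 := Jc_up σ (c := c) (m := t - 2) (by omega)
          have he : t - 2 + 1 = t - 1 := by omega
          rwa [he] at h3
      _ ⊆ Jc n σ (c + 1) t := Jc_mono σ (by omega) (by omega)

lemma Jc_cross_AS {c : ZMod n} {s t : ℕ} (h1 : 1 ≤ t) (h : t < s)
    (hp : t % 2 = 0 ∨ t + 2 ≤ s) : Jc n σ (c + 1) t ⊆ Jc n σ c s := by
  rcases Nat.even_or_odd t with ht | ht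
  · have ht2 : t % 2 = 0 := Nat.even_iff.1 ht
    calc Jc n σ (c + 1) t ⊆ Jc n σ c (t + 1) := Jc_dn σ ht2 h1
      _ ⊆ Jc n σ c s := Jc_mono σ (by omega) (by omega)
  · have ht2 : t % 2 = 1 := Nat.odd_iff.1 ht
    have hs2 : t + 2 ≤ s := by omega
    calc Jc n σ (c + 1) t ⊆ Jc n σ (c + 1) (t + 1) := Jc_mono σ h1 (by omega)
      _ ⊆ Jc n σ c (t + 2) := Jc_dn σ (by omega) (by omega)
      _ ⊆ Jc n σ c s := Jc_mono σ (by omega) hs2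

lemma Jc_ne [NeZero n] {c : ZMod n} {m m' : ℕ} (h1 : 1 ≤ m) (h2 : m ≤ n - 1)
    (h1' : 1 ≤ m') (h2' : m' ≤ n - 1) : Jc n σ c m ≠ Jc n σ (c + 1) m' := by
  rcases eq_or_ne m m' with rfl | hne
  · intro hEq
    have hy : σ ((c + 1 - ((m / 2 : ℕ) : ZMod n)) + ((m - 1 : ℕ) : ZMod n))
        ∈ Jc n σ (c + 1) m := by
      rw [Jc, mem_cycInterval]
      exact ⟨m - 1, le_rfl, rfl⟩
    rw [← hEq, Jc, mem_cycInterval] at hy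
    obtain ⟨s, hs, hy⟩ := hy
    have he := σ.injective hy
    have h3 : (s : ZMod n) = ((m : ℕ) : ZMod n) := by
      have hm1 : ((m - 1 : ℕ) : ZMod n) = (m : ZMod n) - 1 := by
        have h4 : m - 1 + 1 = m := by omega
        calc ((m - 1 : ℕ) : ZMod n) = ((m - 1 + 1 : ℕ) : ZMod n) - 1 := by push_cast; ring
          _ = (m : ZMod n) - 1 := by rw [h4]
      rw [hm1] at he
      linear_combination he
    have := congrArg ZMod.val h3
    rw [ZMod.val_cast_of_lt (by omega), ZMod.val_cast_of_lt (by omega)] at this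
    omega
  · intro hEq
    have := congrArg Finset.card hEq
    rw [card_Jc σ h1 h2, card_Jc σ h1' h2'] at this
    exact hne this

end Aux

/-- If the chain `C (i+1)` is of type `(k+1)^L` (it meets `𝒜` in `k + 1` sets, the second
largest of which has even cardinality), then `|𝒜 ∩ C i| ≤ k - 1`; moreover, in case of
equality, the largest set of `𝒜 ∩ C i` has the same cardinality as the second largest set
of `𝒜 ∩ C (i+1)`. -/
theorem Yk_chain_cor (n k : ℕ) (hk : 2 ≤ k) (σ : ZMod n ≃ Fin n)
    (𝒜 : Finset (Finset (Fin n))) (hInt : ∀ I ∈ 𝒜, IsCycInterval n σ I)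
    (hY : ¬ ContainsYk k 𝒜) (hY' : ¬ ContainsYk' k 𝒜) (i : ZMod n)
    (hcard : (𝒜 ∩ chainC n σ (i + 1)).card = k + 1)
    (B : Finset (Fin n)) (hB : IsSecondLargestCard (𝒜 ∩ chainC n σ (i + 1)) B)
    (heven : Even B.card) :
    (𝒜 ∩ chainC n σ i).card ≤ k - 1 ∧
      ((𝒜 ∩ chainC n σ i).card = k - 1 →
        ∀ L : Finset (Fin n), IsLargestCard (𝒜 ∩ chainC n σ i) L → L.card = B.card) := by
  classical
  set T := 𝒜 ∩ chainC n σ (i + 1) with hTdef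
  have hTsub : T ⊆ chainC n σ (i + 1) := inter_subset_right
  have hnk : k + 2 ≤ n := by
    have h1 : T.card ≤ (chainC n σ (i + 1)).card := card_le_card hTsub
    have h2 : (chainC n σ (i + 1)).card ≤ (Icc 1 (n - 1)).card := card_image_le
    have h3 := Nat.card_Icc 1 (n - 1)
    omega
  haveI : NeZero n := ⟨by omega⟩
  have memChain : ∀ (c : ZMod n) (X : Finset (Fin n)), X ∈ chainC n σ c →
      1 ≤ X.card ∧ X.card ≤ n - 1 ∧ X = Jc n σ c X.card := by
    intro c X hX
    rw [mem_chainC] at hX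
    obtain ⟨m, h1, h2, rfl⟩ := hX
    rw [card_Jc σ h1 h2]
    exact ⟨h1, h2, rfl⟩
  have JmemChain : ∀ (c : ZMod n) (m : ℕ), 1 ≤ m → m ≤ n - 1 → Jc n σ c m ∈ chainC n σ c := by
    intro c m h1 h2; rw [mem_chainC]; exact ⟨m, h1, h2, rfl⟩
  have injOnCard : ∀ c : ZMod n,
      Set.InjOn Finset.card (chainC n σ c : Set (Finset (Fin n))) := by
    intro c X hX Y hYc h
    rw [(memChain c X hX).2.2, (memChain c Y hYc).2.2, h]
  set K := T.image Finset.card with hKdef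
  have hKcard : K.card = k + 1 := by
    rw [hKdef, card_image_of_injOn ((injOnCard (i + 1)).mono (by exact_mod_cast hTsub))]
    exact hcard
  obtain ⟨f, fmono, fmem, fsurj⟩ :
      ∃ f : Fin (k + 1) → ℕ, StrictMono f ∧ (∀ j, f j ∈ K) ∧ ∀ t ∈ K, ∃ j, f j = t := by
    refine ⟨(K.orderEmbOfFin hKcard : Fin (k + 1) → ℕ),
      (K.orderEmbOfFin hKcard).strictMono,
      fun j => K.orderEmbOfFin_mem hKcard j, fun t ht => ?_⟩
    have h := K.range_orderEmbOfFin hKcard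
    have h2 : t ∈ Set.range (K.orderEmbOfFin hKcard) := by rw [h]; exact_mod_cast ht
    exact h2
  have Kfact : ∀ t ∈ K, Jc n σ (i + 1) t ∈ T ∧ 1 ≤ t ∧ t ≤ n - 1 := by
    intro t ht
    rw [hKdef, mem_image] at ht
    obtain ⟨X, hXT, rfl⟩ := ht
    have hXc : X ∈ chainC n σ (i + 1) := hTsub hXT
    obtain ⟨h1, h2, hXe⟩ := memChain _ _ hXc
    exact ⟨hXe ▸ hXT, h1, h2⟩
  have AsetT : ∀ j : Fin (k + 1), Jc n σ (i + 1) (f j) ∈ T := fun j => (Kfact _ (fmem j)).1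
  have AsetA : ∀ j : Fin (k + 1), Jc n σ (i + 1) (f j) ∈ 𝒜 :=
    fun j => (mem_inter.1 (AsetT j)).1
  have Achain : ∀ j : Fin (k + 1), Jc n σ (i + 1) (f j) ∈ chainC n σ (i + 1) :=
    fun j => hTsub (AsetT j)
  have fpos : ∀ j : Fin (k + 1), 1 ≤ f j := fun j => (Kfact _ (fmem j)).2.1
  have Acard : ∀ j : Fin (k + 1), (Jc n σ (i + 1) (f j)).card = f j :=
    fun j => card_Jc σ (Kfact _ (fmem j)).2.1 (Kfact _ (fmem j)).2.2
  have hBT : B ∈ T := hB.1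
  have hBA : B ∈ 𝒜 := (mem_inter.1 hBT).1
  have hBchain : B ∈ chainC n σ (i + 1) := hTsub hBT
  have hBb : B = Jc n σ (i + 1) B.card := (memChain _ _ hBchain).2.2
  have hbK : B.card ∈ K := mem_image_of_mem _ hBT
  have hb1 : 1 ≤ B.card := (memChain _ _ hBchain).1
  have hbeven : B.card % 2 = 0 := Nat.even_iff.1 heven
  -- second-largest index
  have hfilterK : (K.filter fun x => B.card < x).card = 1 := by
    rw [hKdef, filter_image, card_image_of_injOn
      ((injOnCard (i + 1)).mono (Finset.coe_subset.2 ((filter_subset _ T).trans hTsub)))]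
    exact hB.2
  have hfb : f ⟨k - 1, Nat.lt_succ_of_le (Nat.sub_le k 1)⟩ = B.card := by
    obtain ⟨j₀, hj₀⟩ := fsurj _ hbK
    have hjv : j₀.val = k - 1 := by
      by_contra hne
      rcases Nat.lt_or_ge j₀.val (k - 1) with hlt | hge
      · have hmem1 : f ⟨k - 1, Nat.lt_succ_of_le (Nat.sub_le k 1)⟩ ∈ K.filter fun x => B.card < x :=
          mem_filter.2 ⟨fmem _, hj₀ ▸ fmono (Fin.lt_def.2 (show j₀.val < k - 1 from hlt))⟩
        have hmem2 : f ⟨k, Nat.lt_succ_self k⟩ ∈ K.filter fun x => B.card < x :=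
          mem_filter.2 ⟨fmem _, hj₀ ▸ fmono (Fin.lt_def.2 (show j₀.val < k by omega))⟩
        have hne12 : f ⟨k - 1, Nat.lt_succ_of_le (Nat.sub_le k 1)⟩ ≠ f ⟨k, Nat.lt_succ_self k⟩ :=
          ne_of_lt (fmono (Fin.lt_def.2 (show k - 1 < k by omega)))
        have h2 : 1 < (K.filter fun x => B.card < x).card :=
          one_lt_card.2 ⟨_, hmem1, _, hmem2, hne12⟩
        omega
      · have hj0 : j₀.val = k := by have := j₀.isLt; omega
        have hempty : (K.filter fun x => B.card < x) = ∅ := by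
          rw [filter_eq_empty_iff]
          intro x hx
          obtain ⟨j, rfl⟩ := fsurj x hx
          have hle : f j ≤ f j₀ := fmono.monotone (Fin.le_def.2 (by have := j.isLt; omega))
          rw [hj₀] at hle
          omega
        rw [hempty] at hfilterK
        simp at hfilterK
    rw [← hj₀]
    congr 1
    exact Fin.ext hjv.symm
  have hABJ : Jc n σ (i + 1) (f ⟨k - 1, Nat.lt_succ_of_le (Nat.sub_le k 1)⟩) = B := by rw [hfb]; exact hBb.symm
  have hcross : ∀ X ∈ chainC n σ i, ∀ Y ∈ chainC n σ (i + 1), X ≠ Y := by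
    intro X hX Y hYc
    obtain ⟨hX1, hX2, hXe⟩ := memChain _ _ hX
    obtain ⟨hY1, hY2, hYe⟩ := memChain _ _ hYc
    rw [hXe, hYe]
    exact Jc_ne σ hX1 hX2 hY1 hY2
  -- Construction 1 : no member of 𝒜 ∩ C_i contains B
  have hnotup : ∀ X, X ∈ 𝒜 → X ∈ chainC n σ i → ¬ (B ⊆ X) := by
    intro X hXA hXc hBX
    apply hY
    refine ⟨fun j : Fin k => Jc n σ (i + 1) (f j.castSucc),
      Jc n σ (i + 1) (f (Fin.last k)), X,
      fun j => AsetA _, AsetA _, hXA, ?_, ?_, ?_, ?_, ?_, ?_, ?_⟩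
    · intro a b h
      have hc := congrArg Finset.card h
      rw [Acard, Acard] at hc
      exact Fin.castSucc_injective k (fmono.injective hc)
    · intro j h
      have hc := congrArg Finset.card h
      rw [Acard, Acard] at hc
      exact absurd hc (ne_of_lt (fmono (Fin.castSucc_lt_last j)))
    · exact fun j => (hcross X hXc _ (Achain _)).symm
    · exact (hcross X hXc _ (Achain _)).symm
    · intro p q hpq
      exact Jc_mono σ (fpos _) (fmono.monotone (Fin.castSucc_le_castSucc_iff.2 hpq))
    · intro j
      exact Jc_mono σ (fpos _) (fmono.monotone (le_of_lt (Fin.castSucc_lt_last j)))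
    · intro j
      have h1 : Jc n σ (i + 1) (f j.castSucc) ⊆ Jc n σ (i + 1) (f ⟨k - 1, Nat.lt_succ_of_le (Nat.sub_le k 1)⟩) := by
        refine Jc_mono σ (fpos _) (fmono.monotone (Fin.le_def.2 ?_))
        show (j : ℕ) ≤ k - 1
        have := j.isLt
        omega
      rw [hABJ] at h1
      exact h1.trans hBX
  have hcardle : ∀ X, X ∈ 𝒜 → X ∈ chainC n σ i → X.card ≤ B.card := by
    intro X hXA hXc
    by_contra hgt
    push_neg at hgt
    refine hnotup X hXA hXc ?_
    have hXe := (memChain _ _ hXc).2.2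
    have hsub := Jc_cross_AS σ (c := i) hb1 hgt (Or.inl hbeven)
    rw [← hBb, ← hXe] at hsub
    exact hsub
  -- Construction 2 : no member of 𝒜 ∩ C_i is contained in A_2
  have hnotdn : ∀ X, X ∈ 𝒜 → X ∈ chainC n σ i →
      ¬ (X ⊆ Jc n σ (i + 1) (f ⟨1, Nat.lt_succ_of_le (le_trans one_le_two hk)⟩)) := by
    intro X hXA hXc hsub
    apply hY'
    refine ⟨fun j : Fin k => Jc n σ (i + 1) (f ⟨k - (j : ℕ), Nat.lt_succ_of_le (Nat.sub_le k j)⟩),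
      Jc n σ (i + 1) (f ⟨0, Nat.succ_pos k⟩), X,
      fun j => AsetA _, AsetA _, hXA, ?_, ?_, ?_, ?_, ?_, ?_, ?_⟩
    · intro a b h
      have hc := congrArg Finset.card h
      rw [Acard, Acard] at hc
      have := fmono.injective hc
      have hv : k - (a : ℕ) = k - (b : ℕ) := congrArg Fin.val this
      have ha := a.isLt; have hb2 := b.isLt
      exact Fin.ext (by omega)
    · intro j h
      have hc := congrArg Finset.card h
      rw [Acard, Acard] at hc
      have := fmono.injective hc
      have hv : k - (j : ℕ) = 0 := congrArg Fin.val this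
      have := j.isLt; omega
    · exact fun j => (hcross X hXc _ (Achain _)).symm
    · exact (hcross X hXc _ (Achain _)).symm
    · intro p q hpq
      have hpq' : (p : ℕ) ≤ (q : ℕ) := hpq
      exact Jc_mono σ (fpos _) (fmono.monotone (Fin.mk_le_mk.2 (by omega)))
    · intro j
      exact Jc_mono σ (fpos _) (fmono.monotone (Fin.mk_le_mk.2 (by omega)))
    · intro j
      refine subset_trans hsub ?_
      exact Jc_mono σ (fpos _) (fmono.monotone (Fin.mk_le_mk.2 (by have := j.isLt; omega)))
  have hs_low : ∀ X, X ∈ 𝒜 → X ∈ chainC n σ i →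
      f ⟨1, Nat.lt_succ_of_le (le_trans one_le_two hk)⟩ ≤ X.card ∨
      (f ⟨1, Nat.lt_succ_of_le (le_trans one_le_two hk)⟩ % 2 = 1 ∧ X.card + 1 = f ⟨1, Nat.lt_succ_of_le (le_trans one_le_two hk)⟩) := by
    intro X hXA hXc
    by_contra hcon
    push_neg at hcon
    obtain ⟨hlt, hpar⟩ := hcon
    refine hnotdn X hXA hXc ?_
    have hXe := (memChain _ _ hXc).2.2
    have hor : f ⟨1, Nat.lt_succ_of_le (le_trans one_le_two hk)⟩ % 2 = 0 ∨ X.card + 2 ≤ f ⟨1, Nat.lt_succ_of_le (le_trans one_le_two hk)⟩ := by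
      by_cases h2 : f ⟨1, Nat.lt_succ_of_le (le_trans one_le_two hk)⟩ % 2 = 1
      · exact Or.inr (by have := hpar h2; omega)
      · exact Or.inl (by omega)
    have hsub := Jc_cross_SA σ (c := i) (memChain _ _ hXc).1 hlt hor
    rw [← hXe] at hsub
    exact hsub
  have core : ∀ Sc : ℕ → Finset (Fin n),
      (∀ m, m ≤ k - 2 → Sc m ∈ 𝒜 ∧ Sc m ∈ chainC n σ i) →
      (∀ m m', m < m' → m' ≤ k - 2 → (Sc m).card < (Sc m').card) →
      (∀ m, m ≤ k - 2 → (Sc m).card + 1 ≤ B.card) → False := by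
    intro Sc hmem hmono hbd
    have hSc : ∀ m, m ≤ k - 2 →
        1 ≤ (Sc m).card ∧ (Sc m).card ≤ n - 1 ∧ Sc m = Jc n σ i (Sc m).card :=
      fun m hm => memChain _ _ (hmem m hm).2
    have hSS : ∀ m m', m ≤ m' → m' ≤ k - 2 → Sc m ⊆ Sc m' := by
      intro m m' hle hm'
      rcases eq_or_lt_of_le hle with rfl | hlt
      · exact subset_rfl
      · have h1 := hSc m (by omega)
        have h2 := hSc m' hm'
        rw [h1.2.2, h2.2.2]
        exact Jc_mono σ h1.1 (le_of_lt (hmono m m' hlt hm'))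
    have hScB : ∀ m, m ≤ k - 2 → Sc m ⊆ B := by
      intro m hm
      have h1 := hSc m hm
      have h2 : Sc m ⊆ Jc n σ (i + 1) B.card := by
        rw [h1.2.2]
        exact Jc_cross_SA σ h1.1 (by have := hbd m hm; omega) (Or.inl hbeven)
      rwa [← hBb] at h2
    have hbtop : B.card < f (Fin.last k) := by
      rw [← hfb]
      exact fmono (Fin.lt_def.2 (show k - 1 < k by omega))
    have hBtop : B ⊆ Jc n σ (i + 1) (f (Fin.last k)) := by
      have h2 : Jc n σ (i + 1) (f ⟨k - 1, Nat.lt_succ_of_le (Nat.sub_le k 1)⟩)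
          ⊆ Jc n σ (i + 1) (f (Fin.last k)) :=
        Jc_mono σ (fpos _) (fmono.monotone (Fin.le_def.2 (show k - 1 ≤ k from Nat.sub_le k 1)))
      rwa [hABJ] at h2
    have hA1S : ∀ m, 1 ≤ m → m ≤ k - 2 →
        Jc n σ (i + 1) (f ⟨0, Nat.succ_pos k⟩) ⊆ Sc m := by
      intro m hm1 hm2
      have hm := hSc m hm2
      have hsm : (Sc 0).card < (Sc m).card := hmono 0 m (by omega) hm2
      have ht12 : f ⟨0, Nat.succ_pos k⟩ < f ⟨1, Nat.lt_succ_of_le (le_trans one_le_two hk)⟩ :=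
        fmono (Fin.lt_def.2 (show (0 : ℕ) < 1 from Nat.one_pos))
      have hlow := hs_low (Sc 0) (hmem 0 (by omega)).1 (hmem 0 (by omega)).2
      rw [hm.2.2]
      refine Jc_cross_AS σ (fpos _) ?_ ?_
      · rcases hlow with h | ⟨hp, he⟩ <;> omega
      · by_cases hpar : f ⟨0, Nat.succ_pos k⟩ % 2 = 0
        · exact Or.inl hpar
        · refine Or.inr ?_
          rcases hlow with h | ⟨hp, he⟩ <;> omega
    set Af : Fin k → Finset (Fin n) := fun j =>
      if (j : ℕ) = 0 then Jc n σ (i + 1) (f (Fin.last k))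
      else if (j : ℕ) = 1 then B else Sc (k - (j : ℕ)) with hAf
    have hbS : ∀ m, m ≤ k - 2 → (Sc m).card < B.card := fun m hm => by
      have := hbd m hm; omega
    have hcAf : ∀ j : Fin k, (Af j).card =
        if (j : ℕ) = 0 then f (Fin.last k)
        else if (j : ℕ) = 1 then B.card else (Sc (k - (j : ℕ))).card := by
      intro j
      simp only [hAf]
      split_ifs
      · exact Acard _
      · rfl
      · rfl
    have hanti : ∀ p q : Fin k, p < q → (Af q).card < (Af p).card := by
      intro p q hpq
      have hpv : (p : ℕ) < (q : ℕ) := hpq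
      have hql := q.isLt
      rw [hcAf, hcAf]
      split_ifs
      all_goals first
        | omega
        | exact hbtop
        | exact lt_trans (hbS _ (by omega)) hbtop
        | exact hbS _ (by omega)
        | exact hmono _ _ (by omega) (by omega)
    have hinj : Function.Injective Af := by
      intro a b h
      by_contra hne
      rcases Ne.lt_or_gt hne with hl | hl
      · have h2 := hanti a b hl; rw [h] at h2; omega
      · have h2 := hanti b a hl; rw [h] at h2; omega
    have hAfA : ∀ j : Fin k, Af j ∈ 𝒜 := by
      intro j
      simp only [hAf]
      split_ifs
      · exact AsetA _
      · exact hBA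
      · exact (hmem _ (by have := j.isLt; omega)).1
    have hne1 : ∀ j : Fin k, Af j ≠ Sc 0 := by
      intro j
      simp only [hAf]
      split_ifs
      · exact (hcross (Sc 0) (hmem 0 (by omega)).2 _ (Achain _)).symm
      · exact (hcross (Sc 0) (hmem 0 (by omega)).2 _ hBchain).symm
      · intro hEq
        have h2 := congrArg Finset.card hEq
        have h3 := hmono 0 (k - (j : ℕ)) (by have := j.isLt; omega) (by have := j.isLt; omega)
        omega
    have hf0b : f ⟨0, Nat.succ_pos k⟩ < B.card := by
      rw [← hfb]
      exact fmono (Fin.lt_def.2 (show (0 : ℕ) < k - 1 by omega))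
    have hne2 : ∀ j : Fin k, Af j ≠ Jc n σ (i + 1) (f ⟨0, Nat.succ_pos k⟩) := by
      intro j
      simp only [hAf]
      split_ifs
      · intro hEq
        have hc := congrArg Finset.card hEq
        rw [Acard, Acard] at hc
        have : f ⟨0, Nat.succ_pos k⟩ < f (Fin.last k) :=
          fmono (Fin.lt_def.2 (show (0 : ℕ) < k by omega))
        omega
      · intro hEq
        have hc := congrArg Finset.card hEq
        rw [Acard] at hc
        omega
      · exact hcross _ (hmem _ (by have := j.isLt; omega)).2 _ (Achain _)
    have hchainA : ∀ p q : Fin k, p ≤ q → Af q ⊆ Af p := by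
      intro p q hpq
      have hpv : (p : ℕ) ≤ (q : ℕ) := hpq
      have hql := q.isLt
      simp only [hAf]
      split_ifs
      all_goals first
        | exact subset_rfl
        | omega
        | exact hBtop
        | exact (hScB _ (by omega)).trans hBtop
        | exact hScB _ (by omega)
        | exact hSS _ _ (by omega) (by omega)
    have hB'sub : ∀ j : Fin k, Sc 0 ⊆ Af j := by
      intro j
      simp only [hAf]
      split_ifs
      · exact (hScB 0 (by omega)).trans hBtop
      · exact hScB 0 (by omega)
      · exact hSS 0 _ (by omega) (by have := j.isLt; omega)
    have hC'sub : ∀ j : Fin k, Jc n σ (i + 1) (f ⟨0, Nat.succ_pos k⟩) ⊆ Af j := by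
      intro j
      simp only [hAf]
      split_ifs
      · exact Jc_mono σ (fpos _) (fmono.monotone (Fin.le_def.2 (show (0 : ℕ) ≤ k from Nat.zero_le k)))
      · have h2 : Jc n σ (i + 1) (f ⟨0, Nat.succ_pos k⟩)
            ⊆ Jc n σ (i + 1) (f ⟨k - 1, Nat.lt_succ_of_le (Nat.sub_le k 1)⟩) :=
          Jc_mono σ (fpos _) (fmono.monotone (Fin.le_def.2 (show (0 : ℕ) ≤ k - 1 from Nat.zero_le _)))
        rwa [hABJ] at h2
      · exact hA1S _ (by have := j.isLt; omega) (by have := j.isLt; omega)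
    apply hY'
    exact ⟨Af, Sc 0, Jc n σ (i + 1) (f ⟨0, Nat.succ_pos k⟩), hAfA, (hmem 0 (by omega)).1,
      AsetA _, hinj, hne1, hne2, hcross _ (hmem 0 (by omega)).2 _ (Achain _),
      hchainA, hB'sub, hC'sub⟩
  have hUsub : (𝒜 ∩ chainC n σ i) ⊆ chainC n σ i := inter_subset_right
  have hKUcard : ((𝒜 ∩ chainC n σ i).image Finset.card).card = (𝒜 ∩ chainC n σ i).card :=
    card_image_of_injOn ((injOnCard i).mono (Finset.coe_subset.2 hUsub))
  have hUfact : ∀ t ∈ (𝒜 ∩ chainC n σ i).image Finset.card,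
      (Jc n σ i t ∈ 𝒜 ∧ Jc n σ i t ∈ chainC n σ i) ∧ (Jc n σ i t).card = t := by
    intro t ht
    rw [mem_image] at ht
    obtain ⟨X, hXU, rfl⟩ := ht
    have hXc := (mem_inter.1 hXU).2
    have h := memChain _ _ hXc
    constructor
    · rw [← h.2.2]; exact ⟨(mem_inter.1 hXU).1, hXc⟩
    · rw [← h.2.2]
  constructor
  · by_contra hcon
    push_neg at hcon
    have hKUk : k ≤ ((𝒜 ∩ chainC n σ i).image Finset.card).card := by omega
    have hkk : k - 1 < k := by omega
    obtain ⟨e, emono, emem⟩ : ∃ e : Fin k → ℕ, StrictMono e ∧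
        ∀ j, e j ∈ (𝒜 ∩ chainC n σ i).image Finset.card :=
      ⟨_, (Finset.orderEmbOfCardLe _ hKUk).strictMono,
        fun j => Finset.orderEmbOfCardLe_mem _ hKUk j⟩
    have htopb : e ⟨k - 1, hkk⟩ ≤ B.card := by
      have h := hUfact _ (emem ⟨k - 1, hkk⟩)
      have h2 := hcardle _ h.1.1 h.1.2
      omega
    refine core (fun m => Jc n σ i (e ⟨min m (k - 1), lt_of_le_of_lt (min_le_right _ _) hkk⟩)) ?_ ?_ ?_
    · intro m hm
      exact (hUfact _ (emem _)).1
    · intro m m' hmm hm'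
      show (Jc n σ i (e ⟨min m (k - 1), lt_of_le_of_lt (min_le_right _ _) hkk⟩)).card
        < (Jc n σ i (e ⟨min m' (k - 1), lt_of_le_of_lt (min_le_right _ _) hkk⟩)).card
      have hc1 := (hUfact _ (emem ⟨min m (k - 1), lt_of_le_of_lt (min_le_right _ _) hkk⟩)).2
      have hc2 := (hUfact _ (emem ⟨min m' (k - 1), lt_of_le_of_lt (min_le_right _ _) hkk⟩)).2
      have hlt : e ⟨min m (k - 1), lt_of_le_of_lt (min_le_right _ _) hkk⟩
          < e ⟨min m' (k - 1), lt_of_le_of_lt (min_le_right _ _) hkk⟩ :=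
        emono (Fin.lt_def.2 (show min m (k - 1) < min m' (k - 1) by omega))
      omega
    · intro m hm
      show (Jc n σ i (e ⟨min m (k - 1), lt_of_le_of_lt (min_le_right _ _) hkk⟩)).card + 1 ≤ B.card
      have hc1 := (hUfact _ (emem ⟨min m (k - 1), lt_of_le_of_lt (min_le_right _ _) hkk⟩)).2
      have h2 : e ⟨min m (k - 1), lt_of_le_of_lt (min_le_right _ _) hkk⟩ < e ⟨k - 1, hkk⟩ :=
        emono (Fin.lt_def.2 (show min m (k - 1) < k - 1 by omega))
      omega
  · intro hEq L hL
    obtain ⟨hLU, hLmax⟩ := hL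
    have hLA : L ∈ 𝒜 := (mem_inter.1 hLU).1
    have hLc : L ∈ chainC n σ i := (mem_inter.1 hLU).2
    have hLb : L.card ≤ B.card := hcardle L hLA hLc
    by_contra hne
    have hLlt : L.card + 1 ≤ B.card := by
      rcases lt_or_eq_of_le hLb with h | h
      · omega
      · exact absurd h hne
    have hKUk : k - 1 ≤ ((𝒜 ∩ chainC n σ i).image Finset.card).card := by omega
    have hk21 : k - 2 < k - 1 := by omega
    obtain ⟨e, emono, emem⟩ : ∃ e : Fin (k - 1) → ℕ, StrictMono e ∧
        ∀ j, e j ∈ (𝒜 ∩ chainC n σ i).image Finset.card :=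
      ⟨_, (Finset.orderEmbOfCardLe _ hKUk).strictMono,
        fun j => Finset.orderEmbOfCardLe_mem _ hKUk j⟩
    refine core (fun m => Jc n σ i (e ⟨min m (k - 2), lt_of_le_of_lt (min_le_right _ _) hk21⟩)) ?_ ?_ ?_
    · intro m hm
      exact (hUfact _ (emem _)).1
    · intro m m' hmm hm'
      show (Jc n σ i (e ⟨min m (k - 2), lt_of_le_of_lt (min_le_right _ _) hk21⟩)).card
        < (Jc n σ i (e ⟨min m' (k - 2), lt_of_le_of_lt (min_le_right _ _) hk21⟩)).card
      have hc1 := (hUfact _ (emem ⟨min m (k - 2), lt_of_le_of_lt (min_le_right _ _) hk21⟩)).2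
      have hc2 := (hUfact _ (emem ⟨min m' (k - 2), lt_of_le_of_lt (min_le_right _ _) hk21⟩)).2
      have hlt : e ⟨min m (k - 2), lt_of_le_of_lt (min_le_right _ _) hk21⟩
          < e ⟨min m' (k - 2), lt_of_le_of_lt (min_le_right _ _) hk21⟩ :=
        emono (Fin.lt_def.2 (show min m (k - 2) < min m' (k - 2) by omega))
      omega
    · intro m hm
      show (Jc n σ i (e ⟨min m (k - 2), lt_of_le_of_lt (min_le_right _ _) hk21⟩)).card + 1 ≤ B.card
      have hc1 := (hUfact _ (emem ⟨min m (k - 2), lt_of_le_of_lt (min_le_right _ _) hk21⟩)).2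
      have hmemU : Jc n σ i (e ⟨min m (k - 2), lt_of_le_of_lt (min_le_right _ _) hk21⟩) ∈ 𝒜 ∩ chainC n σ i := by
        have h := (hUfact _ (emem ⟨min m (k - 2), lt_of_le_of_lt (min_le_right _ _) hk21⟩)).1
        exact mem_inter.2 ⟨h.1, h.2⟩
      have h3 := hLmax _ hmemU
      omega
end
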